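/- Let P : ℝ → ℝ be a continuously differentiable periodic function with period 1 and let λ ≠ 0. If the function u ↦ P(u) + λ⁻¹ P'(u) converges as u → -∞, then P is constant. -/

import Mathlib

open Filter Topology

/-- If P is a C¹ function of period 1, λ ≠ 0, and u ↦ P(u) + λ⁻¹ P'(u)
converges as u → -∞, then P is constant. -/
theorem periodic_combination_converges_implies_const
    (P : ℝ → ℝ) (hP : ContDiff ℝ 1 P) (hper : Function.Periodic P 1)
    (lam : ℝ) (hlam : lam ≠ 0)
    (hconv : ∃ L : ℝ, Tendsto (fun u => P u + lam⁻¹ * deriv P u) atBot (𝓝 L)) :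
    ∀ u v : ℝ, P u = P v := by
  obtain ⟨L, hL⟩ := hconv
  have hdiff : Differentiable ℝ P := hP.differentiable one_ne_zero
  have hcont : Continuous P := hdiff.continuous
  -- deriv P is also periodic
  have hderper : Function.Periodic (deriv P) 1 := by
    intro x
    have : (fun y => P (y + 1)) = P := funext fun y => hper y
    calc deriv P (x + 1) = deriv (fun y => P (y + 1)) x := (deriv_comp_add_const P 1 x).symm
      _ = deriv P x := by rw [this]
  -- reduce to fundamental domain
  have hdom : ∀ y : ℝ, ∃ x ∈ Set.Icc (0:ℝ) 1, P y = P x := by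
    intro y
    refine ⟨Int.fract y, ⟨Int.fract_nonneg y, (Int.fract_lt_one y).le⟩, ?_⟩
    have h := hper.sub_int_mul_eq (x := y) ⌊y⌋
    rw [mul_one] at h
    rw [Int.fract]
    exact h.symm
  -- max and min on [0,1]
  obtain ⟨u₀, hu₀m, hmax⟩ := isCompact_Icc.exists_isMaxOn (Set.nonempty_Icc.2 zero_le_one)
    (hcont.continuousOn (s := Set.Icc (0:ℝ) 1))
  obtain ⟨u₁, hu₁m, hmin⟩ := isCompact_Icc.exists_isMinOn (Set.nonempty_Icc.2 zero_le_one)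
    (hcont.continuousOn (s := Set.Icc (0:ℝ) 1))
  have hgmax : ∀ y, P y ≤ P u₀ := fun y => by
    obtain ⟨x, hx, hxy⟩ := hdom y; rw [hxy]; exact hmax hx
  have hgmin : ∀ y, P u₁ ≤ P y := fun y => by
    obtain ⟨x, hx, hxy⟩ := hdom y; rw [hxy]; exact hmin hx
  -- derivatives vanish at global extrema
  have hd0 : deriv P u₀ = 0 :=
    (IsLocalMax.deriv_eq_zero (Filter.Eventually.of_forall hgmax : IsLocalMax P u₀))
  have hd1 : deriv P u₁ = 0 :=
    (IsLocalMin.deriv_eq_zero (Filter.Eventually.of_forall hgmin : IsLocalMin P u₁))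
  -- the sequences u - n tend to -∞
  have hseq : ∀ u : ℝ, Tendsto (fun n : ℕ => u - n) atTop atBot := fun u =>
    tendsto_atBot_add_const_left _ u (tendsto_neg_atBot_iff.2 tendsto_natCast_atTop_atTop)
  have key : ∀ u : ℝ, deriv P u = 0 → P u = L := by
    intro u hdu
    have h1 : Tendsto (fun n : ℕ => P (u - n) + lam⁻¹ * deriv P (u - n)) atTop (𝓝 L) :=
      hL.comp (hseq u)
    have h2 : (fun n : ℕ => P (u - n) + lam⁻¹ * deriv P (u - n)) = fun _ => P u := by
      funext n
      have e1 : P (u - n) = P u := by simpa using hper.sub_nat_mul_eq (x := u) n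
      have e2 : deriv P (u - n) = deriv P u := by simpa using hderper.sub_nat_mul_eq (x := u) n
      rw [e1, e2, hdu, mul_zero, add_zero]
    rw [h2] at h1
    exact tendsto_nhds_unique tendsto_const_nhds h1
  have hmaxL : P u₀ = L := key u₀ hd0
  have hminL : P u₁ = L := key u₁ hd1
  intro u v
  have h1 : P u = L := le_antisymm (hmaxL ▸ hgmax u) (hminL ▸ hgmin u)
  have h2 : P v = L := le_antisymm (hmaxL ▸ hgmax v) (hminL ▸ hgmin v)
  rw [h1, h2]
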